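/- Let B(k) := 36k² + 3k(4k+1)² and a(k) := k·(3/5 - k)²·(1 - 3k)·e^{-5}. For k = 0.038895 and Δ = 7,327,700,972, the inequality (a(k)·Δ - 2)² / (2·B(k)·Δ) ≥ 1 + ln(2(Δ⁴ + 2)) holds. -/

import Mathlib

theorem stmt_10 :
    ((0.038895 * (3/5 - 0.038895)^2 * (1 - 3*0.038895) * Real.exp (-5))
        * 7327700972 - 2)^2
      / (2 * (36*(0.038895:ℝ)^2 + 3*0.038895*(4*0.038895+1)^2) * 7327700972)
    ≥ 1 + Real.log (2 * ((7327700972:ℝ)^4 + 2)) := by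
  -- Upper bound on exp(5/8)
  have hU : Real.exp (5/8) ≤ (1868245957432222407/1000000000000000000 : ℝ) := by
    have h := Real.exp_bound' (x := 5/8) (by norm_num) (by norm_num) (n := 18) (by norm_num)
    refine h.trans ?_
    norm_num [Finset.sum_range_succ, Nat.factorial]
  have hE5 : Real.exp 5 ≤ (1868245957432222407/1000000000000000000 : ℝ)^8 := by
    have h8 : Real.exp 5 = Real.exp (5/8) ^ 8 := by
      rw [← Real.exp_nat_mul]; norm_num
    rw [h8]
    exact pow_le_pow_left₀ (Real.exp_pos _).le hU 8
  have htlo : (((1868245957432222407/1000000000000000000 : ℝ)^8)⁻¹) ≤ Real.exp (-5) := by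
    rw [Real.exp_neg]
    exact inv_anti₀ (Real.exp_pos 5) hE5
  -- Lower bound on exp(91.552857814)
  have hS : (204471149575488607/100000000000000000 : ℝ) ≤ Real.exp (91.552857814/128) := by
    have h := Real.sum_le_exp_of_nonneg (x := (91.552857814 : ℝ)/128) (by norm_num) 16
    refine le_trans ?_ h
    norm_num [Finset.sum_range_succ, Nat.factorial]
  have hEq : ((204471149575488607/100000000000000000 : ℝ))^128 ≤ Real.exp 91.552857814 := by
    have h128 : Real.exp (91.552857814 : ℝ) = Real.exp (91.552857814/128) ^ 128 := by
      rw [← Real.exp_nat_mul]; norm_num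
    rw [h128]
    exact pow_le_pow_left₀ (by norm_num) hS 128
  have hlog : Real.log (2 * ((7327700972:ℝ)^4 + 2)) ≤ 91.552857814 := by
    rw [Real.log_le_iff_le_exp (by positivity)]
    refine le_trans ?_ hEq
    norm_num
  have hden : (0:ℝ) < 2 * (36*(0.038895:ℝ)^2 + 3*0.038895*(4*0.038895+1)^2) * 7327700972 := by
    norm_num
  rw [ge_iff_le, le_div_iff₀ hden]
  calc (1 + Real.log (2 * ((7327700972:ℝ)^4 + 2)))
        * (2 * (36*(0.038895:ℝ)^2 + 3*0.038895*(4*0.038895+1)^2) * 7327700972)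
      ≤ (1 + 91.552857814)
        * (2 * (36*(0.038895:ℝ)^2 + 3*0.038895*(4*0.038895+1)^2) * 7327700972) := by
        apply mul_le_mul_of_nonneg_right _ hden.le
        exact add_le_add_right hlog 1
    _ ≤ ((0.038895 * (3/5 - 0.038895)^2 * (1 - 3*0.038895)
          * (((1868245957432222407/1000000000000000000 : ℝ)^8)⁻¹)) * 7327700972 - 2)^2 := by
        norm_num
    _ ≤ ((0.038895 * (3/5 - 0.038895)^2 * (1 - 3*0.038895) * Real.exp (-5))
          * 7327700972 - 2)^2 := by
        apply pow_le_pow_left₀ (by norm_num)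
        apply sub_le_sub_right
        apply mul_le_mul_of_nonneg_right _ (by norm_num)
        exact mul_le_mul_of_nonneg_left htlo (by norm_num)
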